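/- Let (θ_{i,j})_{i,j≥1} be a coagulation kernel satisfying (K1) and (K3). Let f^{in} ∈ X_1^+, let (n_k) be a sequence of integers with n_k → ∞, and for each k let f^{n_k} be the nonnegative global solution of the truncated RBK system of size n_k with initial data f_i^{n_k}(0) = f_i^{in} for 1 ≤ i ≤ n_k. Suppose that for each i ≥ 1 and each t ≥ 0, f_i^{n_k}(t) → f_i(t) as k → ∞ for some functions f_i : [0,∞) → [0,∞). Then for every i ≥ 1 and every T ∈ (0,∞), the gain term converges: Σ_{j=1}^{n_k−i} θ_{i+j,j} f_{i+j}^{n_k} f_j^{n_k} → Σ_{j=1}^{∞} θ_{i+j,j} f_{i+j} f_j in L^1(0,T) as k → ∞. -/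

import Mathlib

open MeasureTheory Finset Filter

/-- `IsTruncRBKOn θ n I f` : the family `(f i)_{1 ≤ i ≤ n}` solves the truncated
Redner–Ben-Avraham–Kahng coagulation system of size `n` with kernel `θ` on the set `I`:
`df_i/dt = ∑_{j=1}^{n-i} θ_{i+j,j} f_{i+j} f_j − ∑_{j=1}^{n} θ_{i,j} f_i f_j`. -/
def IsTruncRBKOn (θ : ℕ → ℕ → ℝ) (n : ℕ) (I : Set ℝ) (f : ℕ → ℝ → ℝ) : Prop :=
  ∀ i ∈ Finset.Icc 1 n, ∀ t ∈ I,
    HasDerivWithinAt (f i)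
      ((∑ j ∈ Finset.Icc 1 (n - i), θ (i + j) j * f (i + j) t * f j t)
        - ∑ j ∈ Finset.Icc 1 n, θ i j * f i t * f j t) I t
lemma RBK_alg_ineq (θ : ℕ → ℕ → ℝ) (n : ℕ) (u : ℕ → ℝ)
    (hθs : ∀ i j, 1 ≤ i → 1 ≤ j → θ i j = θ j i)
    (hθ0 : ∀ i j, 1 ≤ i → 1 ≤ j → 0 ≤ θ i j)
    (hu : ∀ j, 1 ≤ j → j ≤ n → 0 ≤ u j) (i : ℕ) (hi : 1 ≤ i) :
    ∑ j ∈ Icc 1 (n - i), 2 * (j:ℝ) * (θ (i+j) j * u (i+j) * u j)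
      ≤ ∑ l ∈ Icc 1 n, (l:ℝ) *
          ((∑ j ∈ Icc 1 n, θ l j * u l * u j)
            - ∑ j ∈ Icc 1 (n - l), θ (l+j) j * u (l+j) * u j) := by
  set w : ℕ → ℕ → ℝ := fun l j => θ l j * u l * u j with hw
  have hw0 : ∀ l j, 1 ≤ l → l ≤ n → 1 ≤ j → j ≤ n → 0 ≤ w l j := fun l j hl hln hj hjn =>
    mul_nonneg (mul_nonneg (hθ0 l j hl hj) (hu l hl hln)) (hu j hj hjn)
  have hwsymm : ∀ l j, 1 ≤ l → 1 ≤ j → w l j = w j l := by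
    intro l j hl hj
    simp only [hw, hθs l j hl hj]; ring
  set P : Finset (ℕ × ℕ) := ((Icc 1 n) ×ˢ (Icc 1 n)).filter (fun p => p.2 < p.1) with hP
  have hmemP : ∀ p : ℕ × ℕ, p ∈ P ↔ (1 ≤ p.1 ∧ p.1 ≤ n) ∧ (1 ≤ p.2 ∧ p.2 ≤ n) ∧ p.2 < p.1 := by
    intro p
    simp [hP, Finset.mem_filter, Finset.mem_product, Finset.mem_Icc, and_assoc]
  -- gain identity
  have hG : ∑ l ∈ Icc 1 n, (l:ℝ) * ∑ j ∈ Icc 1 (n - l), w (l+j) j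
      = ∑ p ∈ P, ((p.1:ℝ) - (p.2:ℝ)) * w p.1 p.2 := by
    have h1 : ∑ l ∈ Icc 1 n, (l:ℝ) * ∑ j ∈ Icc 1 (n - l), w (l+j) j
        = ∑ a ∈ (Icc 1 n).sigma (fun l => Icc 1 (n - l)), (a.1:ℝ) * w (a.1+a.2) a.2 := by
      rw [Finset.sum_sigma]
      exact Finset.sum_congr rfl (fun l _ => by rw [Finset.mul_sum])
    rw [h1]
    refine Finset.sum_nbij' (fun a => (a.1 + a.2, a.2)) (fun p => ⟨p.1 - p.2, p.2⟩) ?_ ?_ ?_ ?_ ?_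
    · intro a ha
      simp only [Finset.mem_sigma, Finset.mem_Icc] at ha
      rw [hmemP]; simp only []; omega
    · intro p hp
      rw [hmemP] at hp
      simp only [Finset.mem_sigma, Finset.mem_Icc]; omega
    · intro a ha; simp only [Finset.mem_sigma, Finset.mem_Icc] at ha
      ext <;> simp <;> omega
    · intro p hp; rw [hmemP] at hp
      ext <;> simp <;> omega
    · intro a ha; simp only [Finset.mem_sigma, Finset.mem_Icc] at ha
      have : ((a.1 + a.2 : ℕ) : ℝ) = (a.1 : ℝ) + a.2 := by push_cast; ring
      rw [this]; ring
  -- loss inequality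
  have hL : ∑ p ∈ P, ((p.1:ℝ) + (p.2:ℝ)) * w p.1 p.2
      ≤ ∑ l ∈ Icc 1 n, (l:ℝ) * ∑ j ∈ Icc 1 n, w l j := by
    set P' : Finset (ℕ × ℕ) := ((Icc 1 n) ×ˢ (Icc 1 n)).filter (fun p => p.1 < p.2) with hP'
    have hmemP' : ∀ p : ℕ × ℕ, p ∈ P' ↔ (1 ≤ p.1 ∧ p.1 ≤ n) ∧ (1 ≤ p.2 ∧ p.2 ≤ n) ∧ p.1 < p.2 := by
      intro p
      simp [hP', Finset.mem_filter, Finset.mem_product, Finset.mem_Icc, and_assoc]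
    have hsq : ∑ l ∈ Icc 1 n, (l:ℝ) * ∑ j ∈ Icc 1 n, w l j
        = ∑ p ∈ (Icc 1 n) ×ˢ (Icc 1 n), (p.1:ℝ) * w p.1 p.2 := by
      rw [Finset.sum_product]
      exact Finset.sum_congr rfl (fun l _ => by rw [Finset.mul_sum])
    have hsplit : ∑ p ∈ P, ((p.1:ℝ) + (p.2:ℝ)) * w p.1 p.2
        = ∑ p ∈ P, (p.1:ℝ) * w p.1 p.2 + ∑ p ∈ P, (p.2:ℝ) * w p.1 p.2 := by
      rw [← Finset.sum_add_distrib]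
      exact Finset.sum_congr rfl (fun p _ => by ring)
    have hswap : ∑ p ∈ P, (p.2:ℝ) * w p.1 p.2 = ∑ p ∈ P', (p.1:ℝ) * w p.1 p.2 := by
      refine Finset.sum_nbij' (fun p => (p.2, p.1)) (fun p => (p.2, p.1)) ?_ ?_ ?_ ?_ ?_
      · intro p hp; rw [hmemP] at hp; rw [hmemP']; simp only []; omega
      · intro p hp; rw [hmemP'] at hp; rw [hmemP]; simp only []; omega
      · intro p _; rfl
      · intro p _; rfl
      · intro p hp; rw [hmemP] at hp
        simp only []
        rw [hwsymm p.1 p.2 hp.1.1 hp.2.1.1]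
    rw [hsplit, hswap, hsq, ← Finset.sum_union]
    · refine Finset.sum_le_sum_of_subset_of_nonneg ?_ ?_
      · intro p hp
        rcases Finset.mem_union.1 hp with h | h
        · exact Finset.mem_of_mem_filter p h
        · exact Finset.mem_of_mem_filter p h
      · intro p hp _
        simp only [Finset.mem_product, Finset.mem_Icc] at hp
        exact mul_nonneg (by positivity) (hw0 p.1 p.2 hp.1.1 hp.1.2 hp.2.1 hp.2.2)
    · rw [Finset.disjoint_filter]
      intro p _ h h'; omega
  -- combine
  have hsub : ∑ l ∈ Icc 1 n, (l:ℝ) *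
      ((∑ j ∈ Icc 1 n, w l j) - ∑ j ∈ Icc 1 (n - l), w (l+j) j)
      = (∑ l ∈ Icc 1 n, (l:ℝ) * ∑ j ∈ Icc 1 n, w l j)
        - ∑ l ∈ Icc 1 n, (l:ℝ) * ∑ j ∈ Icc 1 (n - l), w (l+j) j := by
    rw [← Finset.sum_sub_distrib]
    exact Finset.sum_congr rfl (fun l _ => by ring)
  have himg : ∑ j ∈ Icc 1 (n - i), 2 * (j:ℝ) * w (i+j) j
      = ∑ p ∈ (Icc 1 (n - i)).image (fun j => ((i+j, j) : ℕ × ℕ)),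
          2 * (p.2:ℝ) * w p.1 p.2 := by
    rw [Finset.sum_image (fun a _ b _ h => by
      simpa using congrArg Prod.snd h)]
  calc ∑ j ∈ Icc 1 (n - i), 2 * (j:ℝ) * w (i+j) j
      ≤ ∑ p ∈ P, 2 * (p.2:ℝ) * w p.1 p.2 := by
        rw [himg]
        refine Finset.sum_le_sum_of_subset_of_nonneg ?_ ?_
        · intro p hp
          simp only [Finset.mem_image, Finset.mem_Icc] at hp
          obtain ⟨j, hj, rfl⟩ := hp
          rw [hmemP]; simp only []; omega
        · intro p hp _
          rw [hmemP] at hp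
          exact mul_nonneg (by positivity) (hw0 p.1 p.2 hp.1.1 hp.1.2 hp.2.1.1 hp.2.1.2)
      _ ≤ ∑ p ∈ P, (((p.1:ℝ) + p.2) - ((p.1:ℝ) - p.2)) * w p.1 p.2 := by
        refine Finset.sum_le_sum (fun p hp => ?_)
        rw [hmemP] at hp
        have := hw0 p.1 p.2 hp.1.1 hp.1.2 hp.2.1.1 hp.2.1.2
        nlinarith
      _ = ∑ p ∈ P, ((p.1:ℝ) + p.2) * w p.1 p.2 - ∑ p ∈ P, ((p.1:ℝ) - p.2) * w p.1 p.2 := by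
        rw [← Finset.sum_sub_distrib]
        exact Finset.sum_congr rfl (fun p _ => by ring)
      _ ≤ _ := by
        rw [hsub, ← hG]
        exact sub_le_sub hL (le_refl _)

/-- Under (K1) and (K3), for `f^{in} ∈ X₁⁺` and a sequence of truncated
solutions `f^{n_k}` (with `n_k → ∞`) converging pointwise to some nonnegative `f`, the gain
term converges in `L¹(0,T)`:
`∑_{j=1}^{n_k−i} θ_{i+j,j} f_{i+j}^{n_k} f_j^{n_k} → ∑_{j≥1} θ_{i+j,j} f_{i+j} f_j`. -/
theorem truncRBK_gain_term_convergence
    (θ : ℕ → ℕ → ℝ) (ω : ℕ → ℝ) (κ : ℕ → ℕ → ℝ)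
    (hθ_symm : ∀ i j : ℕ, 1 ≤ i → 1 ≤ j → θ i j = θ j i)
    -- (K1)
    (hK1 : ∀ i j : ℕ, 1 ≤ i → 1 ≤ j → θ i j = ω i * ω j + κ i j)
    (hω_nonneg : ∀ i : ℕ, 1 ≤ i → 0 ≤ ω i)
    (hκ_nonneg : ∀ i j : ℕ, 1 ≤ i → 1 ≤ j → 0 ≤ κ i j)
    (hκ_symm : ∀ i j : ℕ, 1 ≤ i → 1 ≤ j → κ i j = κ j i)
    -- (K3)
    (R A : ℝ) (hR : 0 < R) (hA : 0 < A)
    (hωR : ∀ i : ℕ, 1 ≤ i → R * i ≤ ω i)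
    (hκA : ∀ i j : ℕ, 1 ≤ i → 1 ≤ j → κ i j ≤ A * (ω i * ω j))
    -- f^{in} ∈ X₁⁺
    (fin : ℕ → ℝ) (hfin_nonneg : ∀ i : ℕ, 1 ≤ i → 0 ≤ fin i)
    (hfin_summable : Summable (fun i : ℕ => (i : ℝ) * fin i))
    -- the sequence of truncated solutions
    (nk : ℕ → ℕ) (hnk : Tendsto nk atTop atTop)
    (F : ℕ → ℕ → ℝ → ℝ)
    (hF : ∀ k : ℕ, IsTruncRBKOn θ (nk k) (Set.Ici 0) (F k))
    (hFinit : ∀ k : ℕ, ∀ i ∈ Finset.Icc 1 (nk k), F k i 0 = fin i)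
    (hF_nonneg : ∀ k : ℕ, ∀ i ∈ Finset.Icc 1 (nk k), ∀ t ∈ Set.Ici (0:ℝ), 0 ≤ F k i t)
    -- pointwise convergence to a nonnegative limit f
    (f : ℕ → ℝ → ℝ)
    (hf_nonneg : ∀ i : ℕ, 1 ≤ i → ∀ t ∈ Set.Ici (0:ℝ), 0 ≤ f i t)
    (hconv : ∀ i : ℕ, 1 ≤ i → ∀ t ∈ Set.Ici (0:ℝ),
      Tendsto (fun k => F k i t) atTop (nhds (f i t)))
    (i : ℕ) (hi : 1 ≤ i) (T : ℝ) (hT : 0 < T) :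
    Tendsto
      (fun k => ∫ s in (0:ℝ)..T,
        |(∑ j ∈ Finset.Icc 1 (nk k - i), θ (i + j) j * F k (i + j) s * F k j s)
          - ∑' j : ℕ, if 1 ≤ j then θ (i + j) j * f (i + j) s * f j s else 0|)
      atTop (nhds 0) := by
  have hθ0 : ∀ a b : ℕ, 1 ≤ a → 1 ≤ b → 0 ≤ θ a b := by
    intro a b ha hb
    rw [hK1 a b ha hb]
    exact add_nonneg (mul_nonneg (hω_nonneg a ha) (hω_nonneg b hb)) (hκ_nonneg a b ha hb)
  set M : ℝ := ∑' l : ℕ, (l:ℝ) * fin l with hM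
  have hfin_nn : ∀ l : ℕ, 0 ≤ (l:ℝ) * fin l := by
    intro l
    rcases Nat.eq_zero_or_pos l with h | h
    · simp [h]
    · exact mul_nonneg (by positivity) (hfin_nonneg l h)
  have hM0 : 0 ≤ M := tsum_nonneg hfin_nn
  -- continuity of truncated solutions
  have hcontF : ∀ k : ℕ, ∀ j ∈ Finset.Icc 1 (nk k), ContinuousOn (F k j) (Set.Ici 0) :=
    fun k j hj t ht => ((hF k) j hj t ht).continuousWithinAt
  -- mass and dissipation
  set mass : ℕ → ℝ → ℝ := fun k t => ∑ l ∈ Icc 1 (nk k), (l:ℝ) * F k l t with hmass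
  set D : ℕ → ℝ → ℝ := fun k t => ∑ l ∈ Icc 1 (nk k), (l:ℝ) *
      ((∑ j ∈ Icc 1 (nk k), θ l j * F k l t * F k j t)
        - ∑ j ∈ Icc 1 (nk k - l), θ (l+j) j * F k (l+j) t * F k j t) with hD
  have hDcont : ∀ k, ContinuousOn (D k) (Set.Ici 0) := by
    intro k
    refine continuousOn_finset_sum _ (fun l hl => ContinuousOn.mul continuousOn_const ?_)
    refine ContinuousOn.sub ?_ ?_
    · refine continuousOn_finset_sum _ (fun j hj => ?_)
      exact (continuousOn_const.mul (hcontF k l hl)).mul (hcontF k j hj)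
    · refine continuousOn_finset_sum _ (fun j hj => ?_)
      simp only [Finset.mem_Icc] at hl hj
      exact (continuousOn_const.mul (hcontF k (l+j) (by simp only [Finset.mem_Icc]; omega))).mul
        (hcontF k j (by simp only [Finset.mem_Icc]; omega))
  have hmasscont : ∀ k, ContinuousOn (mass k) (Set.Ici 0) :=
    fun k => continuousOn_finset_sum _ (fun l hl => continuousOn_const.mul (hcontF k l hl))
  have hmassderiv : ∀ k, ∀ t ∈ Set.Ici (0:ℝ),
      HasDerivWithinAt (mass k) (-(D k t)) (Set.Ici 0) t := by
    intro k t ht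
    have h1 : HasDerivWithinAt (mass k)
        (∑ l ∈ Icc 1 (nk k), (l:ℝ) *
          ((∑ j ∈ Icc 1 (nk k - l), θ (l+j) j * F k (l+j) t * F k j t)
            - ∑ j ∈ Icc 1 (nk k), θ l j * F k l t * F k j t)) (Set.Ici 0) t := by
      exact HasDerivWithinAt.fun_sum (fun l hl => ((hF k) l hl t ht).const_mul ((l:ℝ)))
    convert h1 using 1
    simp only [hD, ← Finset.sum_neg_distrib]
    exact Finset.sum_congr rfl (fun l _ => by ring)
  -- FTC
  have hFTC : ∀ k, ∀ t ∈ Set.Icc (0:ℝ) T,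
      ∫ s in (0:ℝ)..t, D k s = mass k 0 - mass k t := by
    intro k t ht
    have h0t : (0:ℝ) ≤ t := ht.1
    have key : ∫ s in (0:ℝ)..t, -(D k s) = mass k t - mass k 0 := by
      refine intervalIntegral.integral_eq_sub_of_hasDeriv_right_of_le h0t
        ((hmasscont k).mono (fun x hx => hx.1)) ?_ ?_
      · intro x hx
        exact (hmassderiv k x (le_of_lt hx.1)).mono (fun y hy => le_of_lt (lt_trans hx.1 hy))
      · refine ContinuousOn.intervalIntegrable_of_Icc h0t ?_
        exact ((hDcont k).mono (fun x hx => hx.1)).neg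
    rw [intervalIntegral.integral_neg] at key
    linarith
  -- nonnegativity of D
  have hD0 : ∀ k, ∀ t ∈ Set.Ici (0:ℝ), 0 ≤ D k t := by
    intro k t ht
    have hFn : ∀ a : ℕ, 1 ≤ a → a ≤ nk k → 0 ≤ F k a t := fun a ha han =>
      hF_nonneg k a (by simp only [Finset.mem_Icc]; omega) t ht
    have h := RBK_alg_ineq θ (nk k) (fun j => F k j t) hθ_symm hθ0 hFn i hi
    refine le_trans ?_ h
    refine Finset.sum_nonneg (fun j hj => ?_)
    simp only [Finset.mem_Icc] at hj
    refine mul_nonneg (by positivity) ?_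
    refine mul_nonneg (mul_nonneg (hθ0 _ _ (by omega) (by omega)) ?_) ?_
    · exact hFn (i+j) (by omega) (by omega)
    · exact hFn j (by omega) (by omega)
  -- mass bounds
  have hmass0 : ∀ k, mass k 0 ≤ M := by
    intro k
    have : mass k 0 = ∑ l ∈ Icc 1 (nk k), (l:ℝ) * fin l := by
      simp only [hmass]
      exact Finset.sum_congr rfl (fun l hl => by rw [hFinit k l hl])
    rw [this]
    exact Summable.sum_le_tsum (Icc 1 (nk k)) (fun l _ => hfin_nn l) hfin_summable
  have hmassle : ∀ k, ∀ t ∈ Set.Icc (0:ℝ) T, mass k t ≤ M := by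
    intro k t ht
    have h1 := hFTC k t ht
    have h2 : 0 ≤ ∫ s in (0:ℝ)..t, D k s :=
      intervalIntegral.integral_nonneg ht.1 (fun u hu => hD0 k u hu.1)
    linarith [hmass0 k]
  have hFbound : ∀ k, ∀ j : ℕ, 1 ≤ j → j ≤ nk k → ∀ t ∈ Set.Icc (0:ℝ) T,
      F k j t ≤ M / j := by
    intro k j hj hjn t ht
    have hjm : j ∈ Icc 1 (nk k) := by simp only [Finset.mem_Icc]; omega
    have h1 : (j:ℝ) * F k j t ≤ mass k t := by
      simp only [hmass]
      refine Finset.single_le_sum (f := fun l : ℕ => (l:ℝ) * F k l t) ?_ hjm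
      intro l hl
      simp only [Finset.mem_Icc] at hl
      exact mul_nonneg (by positivity) (hF_nonneg k l (by simp only [Finset.mem_Icc]; omega) t ht.1)
    have hj0 : (0:ℝ) < j := by exact_mod_cast hj
    rw [le_div_iff₀ hj0]
    calc F k j t * j = (j:ℝ) * F k j t := by ring
      _ ≤ mass k t := h1
      _ ≤ M := hmassle k t ht
  have hfbound : ∀ j : ℕ, 1 ≤ j → ∀ t ∈ Set.Icc (0:ℝ) T, f j t ≤ M / j := by
    intro j hj t ht
    refine le_of_tendsto (hconv j hj t ht.1) ?_
    filter_upwards [hnk.eventually_ge_atTop j] with k hk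
    exact hFbound k j hj hk t ht
  -- tail integral bound for truncated solutions
  have hTailk : ∀ m : ℕ, 1 ≤ m → ∀ k,
      ∫ t in (0:ℝ)..T, (∑ j ∈ Icc m (nk k - i), θ (i+j) j * F k (i+j) t * F k j t)
        ≤ M / (2*m) := by
    intro m hm k
    have hm0 : (0:ℝ) < 2*m := by positivity
    have hptw : ∀ t ∈ Set.Icc (0:ℝ) T,
        (∑ j ∈ Icc m (nk k - i), θ (i+j) j * F k (i+j) t * F k j t) ≤ D k t / (2*m) := by
      intro t ht
      rw [le_div_iff₀ hm0]
      have hFn : ∀ a : ℕ, 1 ≤ a → a ≤ nk k → 0 ≤ F k a t := fun a ha han =>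
        hF_nonneg k a (by simp only [Finset.mem_Icc]; omega) t ht.1
      have halg := RBK_alg_ineq θ (nk k) (fun j => F k j t) hθ_symm hθ0 hFn i hi
      have hterm : ∀ j ∈ Icc 1 (nk k - i), (0:ℝ) ≤ 2 * (j:ℝ) *
          (θ (i+j) j * F k (i+j) t * F k j t) := by
        intro j hj
        simp only [Finset.mem_Icc] at hj
        refine mul_nonneg (by positivity) ?_
        exact mul_nonneg (mul_nonneg (hθ0 _ _ (by omega) (by omega))
          (hFn (i+j) (by omega) (by omega))) (hFn j (by omega) (by omega))
      calc (∑ j ∈ Icc m (nk k - i), θ (i+j) j * F k (i+j) t * F k j t) * (2*m)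
          = ∑ j ∈ Icc m (nk k - i), 2 * (m:ℝ) * (θ (i+j) j * F k (i+j) t * F k j t) := by
            rw [Finset.sum_mul]
            exact Finset.sum_congr rfl (fun j _ => by ring)
        _ ≤ ∑ j ∈ Icc m (nk k - i), 2 * (j:ℝ) * (θ (i+j) j * F k (i+j) t * F k j t) := by
            refine Finset.sum_le_sum (fun j hj => ?_)
            simp only [Finset.mem_Icc] at hj
            have hmj : (m:ℝ) ≤ j := by exact_mod_cast hj.1
            have h0 : (0:ℝ) ≤ θ (i+j) j * F k (i+j) t * F k j t :=
              mul_nonneg (mul_nonneg (hθ0 _ _ (by omega) (by omega))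
                (hFn (i+j) (by omega) (by omega))) (hFn j (by omega) (by omega))
            nlinarith
        _ ≤ ∑ j ∈ Icc 1 (nk k - i), 2 * (j:ℝ) * (θ (i+j) j * F k (i+j) t * F k j t) := by
            refine Finset.sum_le_sum_of_subset_of_nonneg ?_ (fun j hj _ => hterm j hj)
            intro j hj
            simp only [Finset.mem_Icc] at hj ⊢
            omega
        _ ≤ D k t := halg
    have hcont1 : ContinuousOn
        (fun t => ∑ j ∈ Icc m (nk k - i), θ (i+j) j * F k (i+j) t * F k j t)
        (Set.Ici 0) := by
      refine continuousOn_finset_sum _ (fun j hj => ?_)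
      simp only [Finset.mem_Icc] at hj
      rcases le_or_gt (nk k) i with hni | hni
      · omega
      · exact (continuousOn_const.mul (hcontF k (i+j) (by simp only [Finset.mem_Icc]; omega))).mul
          (hcontF k j (by simp only [Finset.mem_Icc]; omega))
    calc ∫ t in (0:ℝ)..T, (∑ j ∈ Icc m (nk k - i), θ (i+j) j * F k (i+j) t * F k j t)
        ≤ ∫ t in (0:ℝ)..T, D k t / (2*m) := by
          refine intervalIntegral.integral_mono_on hT.le ?_ ?_ hptw
          · exact ContinuousOn.intervalIntegrable_of_Icc hT.le
              (hcont1.mono (fun x hx => hx.1))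
          · exact ContinuousOn.intervalIntegrable_of_Icc hT.le
              (((hDcont k).mono (fun x hx => hx.1)).div_const _)
      _ = (∫ t in (0:ℝ)..T, D k t) / (2*m) := intervalIntegral.integral_div _ _
      _ ≤ M / (2*m) := by
          refine (div_le_div_iff_of_pos_right hm0).mpr ?_
          have h1 := hFTC k T ⟨le_of_lt hT, le_refl T⟩
          have h2 : 0 ≤ mass k T := by
            refine Finset.sum_nonneg (fun l hl => ?_)
            simp only [Finset.mem_Icc] at hl
            exact mul_nonneg (by positivity)
              (hF_nonneg k l (by simp only [Finset.mem_Icc]; omega) T (le_of_lt hT))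
          linarith [hmass0 k]
  -- measure-theoretic setup
  set μ : Measure ℝ := volume.restrict (Set.Ioc 0 T) with hμ
  have haemem : ∀ᵐ t ∂μ, t ∈ Set.Ioc (0:ℝ) T := ae_restrict_mem measurableSet_Ioc
  have hmeasF : ∀ k, ∀ j : ℕ, 1 ≤ j → j ≤ nk k → AEMeasurable (F k j) μ := by
    intro k j hj hjn
    refine ContinuousOn.aemeasurable ?_ measurableSet_Ioc
    exact (hcontF k j (by simp only [Finset.mem_Icc]; omega)).mono
      (fun x hx => le_of_lt hx.1)
  have hmeasf : ∀ j : ℕ, 1 ≤ j → AEMeasurable (f j) μ := by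
    intro j hj
    obtain ⟨K, hK⟩ := (hnk.eventually_ge_atTop j).exists_forall_of_atTop
    refine aemeasurable_of_tendsto_metrizable_ae atTop
      (f := fun k => F (k + K) j) (fun k => hmeasF (k+K) j hj (hK _ (by omega))) ?_
    filter_upwards [haemem] with t ht
    exact (hconv j hj t (le_of_lt ht.1)).comp (tendsto_add_atTop_nat K)
  set φ : ℕ → ℝ → ℝ := fun j t => θ (i+j) j * f (i+j) t * f j t with hφ
  have hφmeas : ∀ j : ℕ, 1 ≤ j → AEMeasurable (φ j) μ := by
    intro j hj
    exact ((aemeasurable_const.mul (hmeasf (i+j) (by omega))).mul (hmeasf j hj))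
  have hφ0 : ∀ j : ℕ, 1 ≤ j → ∀ t : ℝ, 0 ≤ t → 0 ≤ φ j t := by
    intro j hj t ht
    exact mul_nonneg (mul_nonneg (hθ0 _ _ (by omega) hj) (hf_nonneg (i+j) (by omega) t ht))
      (hf_nonneg j hj t ht)
  have hφle : ∀ j : ℕ, 1 ≤ j → ∀ t ∈ Set.Icc (0:ℝ) T,
      φ j t ≤ θ (i+j) j * (M/((i:ℝ)+j)) * (M/j) := by
    intro j hj t ht
    have h1 : f (i+j) t ≤ M / ((i:ℝ)+j) := by
      have := hfbound (i+j) (by omega) t ht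
      rwa [Nat.cast_add] at this
    have h2 := hfbound j hj t ht
    have h3 := hf_nonneg (i+j) (by omega) t ht.1
    have h4 := hf_nonneg j hj t ht.1
    have h5 := hθ0 (i+j) j (by omega) hj
    have h6 : (0:ℝ) ≤ M / j := le_trans h4 h2
    calc φ j t = θ (i+j) j * f (i+j) t * f j t := rfl
      _ ≤ θ (i+j) j * (M/((i:ℝ)+j)) * (M/j) := by
          refine mul_le_mul (mul_le_mul le_rfl h1 h3 (by positivity)) h2 h4 ?_
          positivity
  -- tail control for the limit via Fatou
  have hTailS : ∀ m : ℕ, 1 ≤ m → ∃ TS : ℝ → ℝ,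
      Integrable TS μ ∧ (∀ t, 0 ≤ TS t) ∧ (∫ t, TS t ∂μ) ≤ M/(2*m) ∧
      (∀ᵐ t ∂μ, (∑' j : ℕ, if 1 ≤ j then φ j t else 0)
          = (∑ j ∈ Icc 1 (m-1), φ j t) + TS t) := by
    intro m hm
    set ψ : ℕ → ℝ → ENNReal := fun j t => ENNReal.ofReal (φ (j+m) t) with hψ
    have hψmeas : ∀ j, AEMeasurable (ψ j) μ := fun j =>
      (hφmeas (j+m) (by omega)).ennreal_ofReal
    set c : ENNReal := ENNReal.ofReal (M/(2*m)) with hc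
    have hA : ∀ J : ℕ, ∑ j ∈ Finset.range J, ∫⁻ t, ψ j t ∂μ ≤ c := by
      intro J
      rw [← MeasureTheory.lintegral_finset_sum' _ (fun j _ => hψmeas j)]
      obtain ⟨K, hK⟩ := (hnk.eventually_ge_atTop (i + m + J)).exists_forall_of_atTop
      set g : ℕ → ℝ → ENNReal := fun k t => ENNReal.ofReal
        (∑ j ∈ Finset.range J, θ (i+(j+m)) (j+m) * F (k+K) (i+(j+m)) t * F (k+K) (j+m) t)
        with hg
      have hgmeas : ∀ k, AEMeasurable (g k) μ := by
        intro k
        refine AEMeasurable.ennreal_ofReal ?_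
        refine Finset.aemeasurable_fun_sum _ (fun j hj => ?_)
        simp only [Finset.mem_range] at hj
        have hkK := hK (k+K) (by omega)
        exact (aemeasurable_const.mul (hmeasF (k+K) (i+(j+m)) (by omega) (by omega))).mul
          (hmeasF (k+K) (j+m) (by omega) (by omega))
      have hlim : ∀ᵐ t ∂μ, Tendsto (fun k => g k t) atTop
          (nhds (ENNReal.ofReal (∑ j ∈ Finset.range J, φ (j+m) t))) := by
        filter_upwards [haemem] with t ht
        refine ENNReal.tendsto_ofReal ?_
        refine tendsto_finset_sum _ (fun j hj => ?_)
        have hs : Tendsto (fun k => k + K) atTop atTop := tendsto_add_atTop_nat K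
        exact (tendsto_const_nhds.mul
          (((hconv (i+(j+m)) (by omega) t (le_of_lt ht.1))).comp hs)).mul
          (((hconv (j+m) (by omega) t (le_of_lt ht.1))).comp hs)
      have heq : ∫⁻ t, ∑ j ∈ Finset.range J, ψ j t ∂μ
          = ∫⁻ t, liminf (fun k => g k t) atTop ∂μ := by
        refine lintegral_congr_ae ?_
        filter_upwards [hlim, haemem] with t hlt ht
        rw [hlt.liminf_eq,
          ← ENNReal.ofReal_sum_of_nonneg (fun j _ => hφ0 (j+m) (by omega) t (le_of_lt ht.1))]
      have hle : ∀ k, ∫⁻ t, g k t ∂μ ≤ c := by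
        intro k
        have hkK := hK (k+K) (by omega)
        set Tail : ℝ → ℝ := fun t =>
          ∑ j ∈ Icc m (nk (k+K) - i), θ (i+j) j * F (k+K) (i+j) t * F (k+K) j t with hTl
        have hTailcont : ContinuousOn Tail (Set.Ici 0) := by
          refine continuousOn_finset_sum _ (fun j hj => ?_)
          simp only [Finset.mem_Icc] at hj
          have hle2 : i + j ≤ nk (k+K) := by omega
          exact (continuousOn_const.mul (hcontF (k+K) (i+j)
            (by simp only [Finset.mem_Icc]; omega))).mul
            (hcontF (k+K) j (by simp only [Finset.mem_Icc]; omega))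
        have hTailnn : ∀ᵐ t ∂μ, 0 ≤ Tail t := by
          filter_upwards [haemem] with t ht
          refine Finset.sum_nonneg (fun j hj => ?_)
          simp only [Finset.mem_Icc] at hj
          have ht0 : (0:ℝ) ≤ t := le_of_lt ht.1
          exact mul_nonneg (mul_nonneg (hθ0 _ _ (by omega) (by omega))
            (hF_nonneg (k+K) (i+j) (by simp only [Finset.mem_Icc]; omega) t ht0))
            (hF_nonneg (k+K) j (by simp only [Finset.mem_Icc]; omega) t ht0)
        have hTailint : Integrable Tail μ := by
          have h1 : IntegrableOn Tail (Set.Icc 0 T) volume :=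
            (hTailcont.mono (fun x hx => hx.1)).integrableOn_Icc
          exact h1.mono_set Set.Ioc_subset_Icc_self
        have hptw : ∀ᵐ t ∂μ, g k t ≤ ENNReal.ofReal (Tail t) := by
          filter_upwards [haemem] with t ht
          refine ENNReal.ofReal_le_ofReal ?_
          have hre : ∑ j ∈ Finset.range J,
              θ (i+(j+m)) (j+m) * F (k+K) (i+(j+m)) t * F (k+K) (j+m) t
              = ∑ j ∈ Finset.Ico m (m+J),
                  θ (i+j) j * F (k+K) (i+j) t * F (k+K) j t := by
            rw [Finset.sum_Ico_eq_sum_range]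
            simp only [Nat.add_sub_cancel_left]
            exact Finset.sum_congr rfl (fun j _ => by rw [Nat.add_comm m j])
          rw [hre]
          refine Finset.sum_le_sum_of_subset_of_nonneg ?_ ?_
          · intro j hj
            simp only [Finset.mem_Ico] at hj
            simp only [Finset.mem_Icc]
            omega
          · intro j hj _
            simp only [Finset.mem_Icc] at hj
            have ht0 : (0:ℝ) ≤ t := le_of_lt ht.1
            exact mul_nonneg (mul_nonneg (hθ0 _ _ (by omega) (by omega))
              (hF_nonneg (k+K) (i+j) (by simp only [Finset.mem_Icc]; omega) t ht0))
              (hF_nonneg (k+K) j (by simp only [Finset.mem_Icc]; omega) t ht0)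
        calc ∫⁻ t, g k t ∂μ ≤ ∫⁻ t, ENNReal.ofReal (Tail t) ∂μ := lintegral_mono_ae hptw
          _ = ENNReal.ofReal (∫ t, Tail t ∂μ) :=
              (ofReal_integral_eq_lintegral_ofReal hTailint hTailnn).symm
          _ ≤ c := by
              refine ENNReal.ofReal_le_ofReal ?_
              have h2 := hTailk m hm (k+K)
              rw [intervalIntegral.integral_of_le hT.le] at h2
              exact h2
      calc ∫⁻ t, ∑ j ∈ Finset.range J, ψ j t ∂μ
          = ∫⁻ t, liminf (fun k => g k t) atTop ∂μ := heq
        _ ≤ liminf (fun k => ∫⁻ t, g k t ∂μ) atTop := lintegral_liminf_le' hgmeas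
        _ ≤ liminf (fun _ : ℕ => c) atTop :=
            Filter.liminf_le_liminf (Filter.Eventually.of_forall hle)
        _ = c := Filter.liminf_const c
    have hB : ∫⁻ t, (∑' j, ψ j t) ∂μ ≤ c := by
      rw [MeasureTheory.lintegral_tsum hψmeas, ENNReal.tsum_eq_iSup_nat]
      exact iSup_le hA
    have hcne : c ≠ ⊤ := by rw [hc]; exact ENNReal.ofReal_ne_top
    set GG : ℝ → ENNReal := fun t => ∑' j, ψ j t with hGG
    have hGGmeas : AEMeasurable GG μ := AEMeasurable.ennreal_tsum hψmeas
    have hGGne : ∫⁻ t, GG t ∂μ ≠ ⊤ := (lt_of_le_of_lt hB (lt_top_iff_ne_top.mpr hcne)).ne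
    have hGGfin : ∀ᵐ t ∂μ, GG t < ⊤ := ae_lt_top' hGGmeas hGGne
    refine ⟨fun t => (GG t).toReal, ?_, fun t => ENNReal.toReal_nonneg, ?_, ?_⟩
    · exact integrable_toReal_of_lintegral_ne_top hGGmeas hGGne
    · rw [integral_eq_lintegral_of_nonneg_ae
        (Filter.Eventually.of_forall (fun t => ENNReal.toReal_nonneg))
        hGGmeas.ennreal_toReal.aestronglyMeasurable]
      have h1 : ∫⁻ t, ENNReal.ofReal ((GG t).toReal) ∂μ ≤ c := by
        refine le_trans (le_of_eq (lintegral_congr_ae ?_)) hB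
        filter_upwards [hGGfin] with t ht
        rw [ENNReal.ofReal_toReal ht.ne]
      exact ENNReal.toReal_le_of_le_ofReal (div_nonneg hM0 (by positivity)) h1
    · filter_upwards [hGGfin, haemem] with t hfin2 ht
      have ht0 : (0:ℝ) ≤ t := le_of_lt ht.1
      have hsum_tail : Summable (fun j => φ (j+m) t) := by
        have h1 := ENNReal.summable_toReal hfin2.ne
        exact h1.congr (fun j => ENNReal.toReal_ofReal (hφ0 (j+m) (by omega) t ht0))
      have hTSval : (GG t).toReal = ∑' j : ℕ, φ (j+m) t := by
        rw [hGG]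
        simp only []
        rw [ENNReal.tsum_toReal_eq (fun j => ENNReal.ofReal_ne_top)]
        exact tsum_congr (fun j => ENNReal.toReal_ofReal (hφ0 (j+m) (by omega) t ht0))
      have hsum_full : Summable (fun j : ℕ => if 1 ≤ j then φ j t else 0) := by
        refine (summable_nat_add_iff m).mp ?_
        exact hsum_tail.congr (fun j => (if_pos (by omega)).symm)
      have hkey := Summable.sum_add_tsum_nat_add (f := fun j : ℕ => if 1 ≤ j then φ j t else 0)
        m hsum_full
      have h2 : (∑' j : ℕ, if 1 ≤ j + m then φ (j+m) t else 0) = (GG t).toReal := by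
        rw [hTSval]
        exact tsum_congr (fun j => if_pos (by omega))
      have h3 : ∑ j ∈ Finset.range m, (if 1 ≤ j then φ j t else 0)
          = ∑ j ∈ Icc 1 (m-1), φ j t := by
        have hsub : Icc 1 (m-1) ⊆ Finset.range m := by
          intro j hj
          simp only [Finset.mem_Icc] at hj
          simp only [Finset.mem_range]
          omega
        have hzero : ∀ x ∈ Finset.range m, x ∉ Icc 1 (m-1) →
            (if 1 ≤ x then φ x t else 0) = 0 := by
          intro x hx hx2
          simp only [Finset.mem_range] at hx
          simp only [Finset.mem_Icc] at hx2
          rw [if_neg (by omega)]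
        calc ∑ j ∈ Finset.range m, (if 1 ≤ j then φ j t else 0)
            = ∑ j ∈ Icc 1 (m-1), (if 1 ≤ j then φ j t else 0) :=
              (Finset.sum_subset hsub hzero).symm
          _ = ∑ j ∈ Icc 1 (m-1), φ j t := by
              refine Finset.sum_congr rfl (fun j hj => ?_)
              simp only [Finset.mem_Icc] at hj
              rw [if_pos hj.1]
      rw [← hkey, h3]
      rw [h2]
  -- auxiliary facts
  have hμfin : μ (Set.univ) < ⊤ := by
    rw [hμ, Measure.restrict_apply_univ]
    exact measure_Ioc_lt_top
  have hconstint : ∀ C : ℝ, Integrable (fun _ : ℝ => C) μ := by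
    intro C
    rw [hμ]
    exact integrableOn_const measure_Ioc_lt_top.ne
  have habs : ∀ a b : ℝ, |a - b| ≤ |a| + |b| := fun a b => by
    rw [sub_eq_add_neg]
    exact (abs_add_le a (-b)).trans (by rw [abs_neg])
  have hFmeasIcc : ∀ k, ∀ m : ℕ, 1 ≤ m → nk k ≥ i + m →
      AEMeasurable (fun t => ∑ j ∈ Icc 1 (m-1),
        θ (i+j) j * F k (i+j) t * F k j t) μ := by
    intro k m hm hk
    refine Finset.aemeasurable_fun_sum _ (fun j hj => ?_)
    simp only [Finset.mem_Icc] at hj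
    exact (aemeasurable_const.mul (hmeasF k (i+j) (by omega) (by omega))).mul
      (hmeasF k j (by omega) (by omega))
  have hHk_bdd : ∀ k, ∀ m : ℕ, 1 ≤ m → nk k ≥ i + m → ∀ t ∈ Set.Icc (0:ℝ) T,
      (0 ≤ ∑ j ∈ Icc 1 (m-1), θ (i+j) j * F k (i+j) t * F k j t) ∧
      (∑ j ∈ Icc 1 (m-1), θ (i+j) j * F k (i+j) t * F k j t
        ≤ ∑ j ∈ Icc 1 (m-1), θ (i+j) j * (M/((i:ℝ)+j)) * (M/(j:ℝ))) := by
    intro k m hm hk t ht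
    constructor
    · refine Finset.sum_nonneg (fun j hj => ?_)
      simp only [Finset.mem_Icc] at hj
      exact mul_nonneg (mul_nonneg (hθ0 _ _ (by omega) (by omega))
        (hF_nonneg k (i+j) (by simp only [Finset.mem_Icc]; omega) t ht.1))
        (hF_nonneg k j (by simp only [Finset.mem_Icc]; omega) t ht.1)
    · refine Finset.sum_le_sum (fun j hj => ?_)
      simp only [Finset.mem_Icc] at hj
      have hb1 : F k (i+j) t ≤ M/((i:ℝ)+j) := by
        have := hFbound k (i+j) (by omega) (by omega) t ht
        rwa [Nat.cast_add] at this
      have hb2 := hFbound k j (by omega) (by omega) t ht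
      have hn1 := hF_nonneg k (i+j) (by simp only [Finset.mem_Icc]; omega) t ht.1
      have hn2 := hF_nonneg k j (by simp only [Finset.mem_Icc]; omega) t ht.1
      have hth := hθ0 (i+j) j (by omega) (by omega)
      have hM2 : (0:ℝ) ≤ M/((i:ℝ)+j) := le_trans hn1 hb1
      refine mul_le_mul (mul_le_mul le_rfl hb1 hn1 hth) hb2 hn2 ?_
      positivity
  have hHead_bdd : ∀ m : ℕ, 1 ≤ m → ∀ t ∈ Set.Icc (0:ℝ) T,
      (0 ≤ ∑ j ∈ Icc 1 (m-1), φ j t) ∧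
      (∑ j ∈ Icc 1 (m-1), φ j t
        ≤ ∑ j ∈ Icc 1 (m-1), θ (i+j) j * (M/((i:ℝ)+j)) * (M/(j:ℝ))) := by
    intro m hm t ht
    constructor
    · refine Finset.sum_nonneg (fun j hj => ?_)
      simp only [Finset.mem_Icc] at hj
      exact hφ0 j hj.1 t ht.1
    · refine Finset.sum_le_sum (fun j hj => ?_)
      simp only [Finset.mem_Icc] at hj
      exact hφle j hj.1 t ht
  have hHeadint : ∀ m : ℕ, 1 ≤ m → Integrable (fun t => ∑ j ∈ Icc 1 (m-1), φ j t) μ := by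
    intro m hm
    refine integrable_finset_sum _ (fun j hj => ?_)
    simp only [Finset.mem_Icc] at hj
    refine Integrable.mono' (hconstint (θ (i+j) j * (M/((i:ℝ)+j)) * (M/(j:ℝ))))
      (hφmeas j hj.1).aestronglyMeasurable ?_
    filter_upwards [haemem] with t ht
    rw [Real.norm_eq_abs, abs_of_nonneg (hφ0 j hj.1 t (le_of_lt ht.1))]
    exact hφle j hj.1 t ⟨le_of_lt ht.1, ht.2⟩
  -- head convergence
  have hHead : ∀ m : ℕ, 1 ≤ m → Tendsto (fun k => ∫ t, |(∑ j ∈ Icc 1 (m-1),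
      θ (i+j) j * F k (i+j) t * F k j t) - ∑ j ∈ Icc 1 (m-1), φ j t| ∂μ)
      atTop (nhds 0) := by
    intro m hm
    have hz : (0:ℝ) = ∫ _t, (0:ℝ) ∂μ := (integral_zero _ _).symm
    rw [hz]
    refine tendsto_integral_filter_of_dominated_convergence
      (bound := fun _ => 2 * ∑ j ∈ Icc 1 (m-1), θ (i+j) j * (M/((i:ℝ)+j)) * (M/(j:ℝ)))
      ?_ ?_ ?_ ?_
    · filter_upwards [hnk.eventually_ge_atTop (i+m)] with k hk
      have hh : AEMeasurable (fun t => ∑ j ∈ Icc 1 (m-1), φ j t) μ :=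
        Finset.aemeasurable_fun_sum _ (fun j hj => hφmeas j (Finset.mem_Icc.mp hj).1)
      have hsub := (hFmeasIcc k m hm hk).sub hh
      have hn := hsub.aestronglyMeasurable.norm
      simp only [Real.norm_eq_abs] at hn
      exact hn
    · filter_upwards [hnk.eventually_ge_atTop (i+m)] with k hk
      filter_upwards [haemem] with t ht
      have htI : t ∈ Set.Icc (0:ℝ) T := ⟨le_of_lt ht.1, ht.2⟩
      obtain ⟨hH0, hHB⟩ := hHk_bdd k m hm hk t htI
      obtain ⟨hh0, hhB⟩ := hHead_bdd m hm t htI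
      rw [Real.norm_eq_abs, abs_abs]
      refine (habs _ _).trans ?_
      rw [abs_of_nonneg hH0, abs_of_nonneg hh0]
      linarith
    · exact hconstint _
    · filter_upwards [haemem] with t ht
      have h1 : Tendsto (fun k => ∑ j ∈ Icc 1 (m-1),
          θ (i+j) j * F k (i+j) t * F k j t) atTop
          (nhds (∑ j ∈ Icc 1 (m-1), φ j t)) := by
        refine tendsto_finset_sum _ (fun j hj => ?_)
        simp only [Finset.mem_Icc] at hj
        exact (tendsto_const_nhds.mul
          (hconv (i+j) (by omega) t (le_of_lt ht.1))).mul
          (hconv j (by omega) t (le_of_lt ht.1))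
      have h2 := (h1.sub (tendsto_const_nhds
        (x := ∑ j ∈ Icc 1 (m-1), φ j t))).abs
      simpa using h2
  -- final assembly
  rw [Metric.tendsto_atTop]
  intro ε hε
  set m : ℕ := Nat.floor (2*M/ε) + 1 with hmdef
  have hm1 : 1 ≤ m := by omega
  have hm0 : (0:ℝ) < m := by positivity
  have hmM : M/m < ε/2 := by
    have h1 : 2*M/ε < m := by
      rw [hmdef]
      push_cast
      exact Nat.lt_floor_add_one _
    rw [div_lt_iff₀ hm0]
    rw [div_lt_iff₀ hε] at h1
    nlinarith
  obtain ⟨TS, hTSint, hTS0, hTSle, hTSid⟩ := hTailS m hm1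
  have hev1 := (hHead m hm1).eventually_lt_const (show (0:ℝ) < ε - M/m by linarith)
  obtain ⟨N, hN⟩ := (hev1.and (hnk.eventually_ge_atTop (i+m))).exists_forall_of_atTop
  refine ⟨N, fun k hk => ?_⟩
  obtain ⟨h1, h2⟩ := hN k hk
  -- notation
  have hTlk_nonneg : ∀ t ∈ Set.Icc (0:ℝ) T,
      0 ≤ ∑ j ∈ Icc m (nk k - i), θ (i+j) j * F k (i+j) t * F k j t := by
    intro t ht
    refine Finset.sum_nonneg (fun j hj => ?_)
    simp only [Finset.mem_Icc] at hj
    exact mul_nonneg (mul_nonneg (hθ0 _ _ (by omega) (by omega))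
      (hF_nonneg k (i+j) (by simp only [Finset.mem_Icc]; omega) t ht.1))
      (hF_nonneg k j (by simp only [Finset.mem_Icc]; omega) t ht.1)
  have hsplit : ∀ t : ℝ,
      ∑ j ∈ Icc 1 (nk k - i), θ (i+j) j * F k (i+j) t * F k j t
      = (∑ j ∈ Icc 1 (m-1), θ (i+j) j * F k (i+j) t * F k j t)
        + ∑ j ∈ Icc m (nk k - i), θ (i+j) j * F k (i+j) t * F k j t := by
    intro t
    have e1 : Icc (1:ℕ) (nk k - i) = Ioc 0 (nk k - i) := Finset.Icc_add_one_left_eq_Ioc 0 _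
    have e2 : Icc (1:ℕ) (m-1) = Ioc 0 (m-1) := Finset.Icc_add_one_left_eq_Ioc 0 _
    have e3 : Icc m (nk k - i) = Ioc (m-1) (nk k - i) := by
      rw [← Finset.Icc_add_one_left_eq_Ioc]
      have hms : (m-1) + 1 = m := by omega
      rw [hms]
    rw [e1, e2, e3]
    exact (Finset.sum_Ioc_consecutive _ (by omega) (by omega)).symm
  -- integrability of pieces
  have hHkint : Integrable (fun t => ∑ j ∈ Icc 1 (m-1),
      θ (i+j) j * F k (i+j) t * F k j t) μ := by
    refine Integrable.mono' (hconstint (∑ j ∈ Icc 1 (m-1),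
      θ (i+j) j * (M/((i:ℝ)+j)) * (M/(j:ℝ))))
      (hFmeasIcc k m hm1 h2).aestronglyMeasurable ?_
    filter_upwards [haemem] with t ht
    have htI : t ∈ Set.Icc (0:ℝ) T := ⟨le_of_lt ht.1, ht.2⟩
    obtain ⟨hH0, hHB⟩ := hHk_bdd k m hm1 h2 t htI
    rw [Real.norm_eq_abs, abs_of_nonneg hH0]
    exact hHB
  have hTlkcont : ContinuousOn (fun t => ∑ j ∈ Icc m (nk k - i),
      θ (i+j) j * F k (i+j) t * F k j t) (Set.Ici 0) := by
    refine continuousOn_finset_sum _ (fun j hj => ?_)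
    simp only [Finset.mem_Icc] at hj
    exact (continuousOn_const.mul (hcontF k (i+j)
      (by simp only [Finset.mem_Icc]; omega))).mul
      (hcontF k j (by simp only [Finset.mem_Icc]; omega))
  have hTlkint : Integrable (fun t => ∑ j ∈ Icc m (nk k - i),
      θ (i+j) j * F k (i+j) t * F k j t) μ := by
    have h3 : IntegrableOn (fun t => ∑ j ∈ Icc m (nk k - i),
        θ (i+j) j * F k (i+j) t * F k j t) (Set.Icc 0 T) volume :=
      (hTlkcont.mono (fun x hx => hx.1)).integrableOn_Icc
    rw [hμ]
    exact h3.mono_set Set.Ioc_subset_Icc_self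
  have hHdint : Integrable (fun t => |(∑ j ∈ Icc 1 (m-1),
      θ (i+j) j * F k (i+j) t * F k j t) - ∑ j ∈ Icc 1 (m-1), φ j t|) μ :=
    (hHkint.sub (hHeadint m hm1)).abs
  -- main bound
  have hIle : ∫ s in (0:ℝ)..T,
      |(∑ j ∈ Finset.Icc 1 (nk k - i), θ (i + j) j * F k (i + j) s * F k j s)
        - ∑' j : ℕ, if 1 ≤ j then φ j s else 0|
      ≤ (∫ t, |(∑ j ∈ Icc 1 (m-1), θ (i+j) j * F k (i+j) t * F k j t)
          - ∑ j ∈ Icc 1 (m-1), φ j t| ∂μ) + M/(2*m) + M/(2*m) := by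
    rw [intervalIntegral.integral_of_le hT.le, ← hμ]
    have hmono : ∫ t, |(∑ j ∈ Finset.Icc 1 (nk k - i),
        θ (i + j) j * F k (i + j) t * F k j t)
        - ∑' j : ℕ, if 1 ≤ j then φ j t else 0| ∂μ
        ≤ ∫ t, (|(∑ j ∈ Icc 1 (m-1), θ (i+j) j * F k (i+j) t * F k j t)
            - ∑ j ∈ Icc 1 (m-1), φ j t|
          + (∑ j ∈ Icc m (nk k - i), θ (i+j) j * F k (i+j) t * F k j t)
          + TS t) ∂μ := by
      refine integral_mono_of_nonneg (Filter.Eventually.of_forall (fun t => abs_nonneg _))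
        ((hHdint.add hTlkint).add hTSint) ?_
      filter_upwards [hTSid, haemem] with t hid ht
      have htI : t ∈ Set.Icc (0:ℝ) T := ⟨le_of_lt ht.1, ht.2⟩
      rw [hid, hsplit t]
      have e4 : (∑ j ∈ Icc 1 (m-1), θ (i+j) j * F k (i+j) t * F k j t)
          + (∑ j ∈ Icc m (nk k - i), θ (i+j) j * F k (i+j) t * F k j t)
          - ((∑ j ∈ Icc 1 (m-1), φ j t) + TS t)
          = ((∑ j ∈ Icc 1 (m-1), θ (i+j) j * F k (i+j) t * F k j t)
              - ∑ j ∈ Icc 1 (m-1), φ j t)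
            + ((∑ j ∈ Icc m (nk k - i), θ (i+j) j * F k (i+j) t * F k j t) - TS t) := by
        ring
      rw [e4]
      refine (abs_add_le _ _).trans ?_
      have h5 := habs (∑ j ∈ Icc m (nk k - i), θ (i+j) j * F k (i+j) t * F k j t) (TS t)
      rw [abs_of_nonneg (hTlk_nonneg t htI), abs_of_nonneg (hTS0 t)] at h5
      linarith
    refine hmono.trans ?_
    have h12 : Integrable (fun t => |(∑ j ∈ Icc 1 (m-1), θ (i+j) j * F k (i+j) t * F k j t)
        - ∑ j ∈ Icc 1 (m-1), φ j t|
        + ∑ j ∈ Icc m (nk k - i), θ (i+j) j * F k (i+j) t * F k j t) μ :=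
      hHdint.add hTlkint
    have hadd : ∫ t, (|(∑ j ∈ Icc 1 (m-1), θ (i+j) j * F k (i+j) t * F k j t)
          - ∑ j ∈ Icc 1 (m-1), φ j t|
        + (∑ j ∈ Icc m (nk k - i), θ (i+j) j * F k (i+j) t * F k j t)
        + TS t) ∂μ
        = (∫ t, |(∑ j ∈ Icc 1 (m-1), θ (i+j) j * F k (i+j) t * F k j t)
            - ∑ j ∈ Icc 1 (m-1), φ j t| ∂μ)
          + (∫ t, (∑ j ∈ Icc m (nk k - i), θ (i+j) j * F k (i+j) t * F k j t) ∂μ)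
          + (∫ t, TS t ∂μ) := by
      calc ∫ t, (|(∑ j ∈ Icc 1 (m-1), θ (i+j) j * F k (i+j) t * F k j t)
              - ∑ j ∈ Icc 1 (m-1), φ j t|
            + (∑ j ∈ Icc m (nk k - i), θ (i+j) j * F k (i+j) t * F k j t)
            + TS t) ∂μ
          = (∫ t, (|(∑ j ∈ Icc 1 (m-1), θ (i+j) j * F k (i+j) t * F k j t)
              - ∑ j ∈ Icc 1 (m-1), φ j t|
            + (∑ j ∈ Icc m (nk k - i), θ (i+j) j * F k (i+j) t * F k j t)) ∂μ)
            + ∫ t, TS t ∂μ := integral_add h12 hTSint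
        _ = _ := by rw [integral_add hHdint hTlkint]
    rw [hadd]
    have h6 : ∫ t, (∑ j ∈ Icc m (nk k - i),
        θ (i+j) j * F k (i+j) t * F k j t) ∂μ ≤ M/(2*m) := by
      have h7 := hTailk m hm1 k
      rw [intervalIntegral.integral_of_le hT.le, ← hμ] at h7
      exact h7
    linarith [hTSle]
  -- conclude
  have hInn : 0 ≤ ∫ s in (0:ℝ)..T,
      |(∑ j ∈ Finset.Icc 1 (nk k - i), θ (i + j) j * F k (i + j) s * F k j s)
        - ∑' j : ℕ, if 1 ≤ j then φ j s else 0| :=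
    intervalIntegral.integral_nonneg hT.le (fun u _ => abs_nonneg _)
  rw [Real.dist_eq, sub_zero, abs_of_nonneg hInn]
  have hmm : M/(2*m) + M/(2*m) = M/m := by
    field_simp
    ring
  calc _ ≤ _ := hIle
    _ < (ε - M/m) + M/(2*m) + M/(2*m) := by linarith [h1]
    _ = ε - M/m + M/m := by linarith [hmm]
    _ = ε := by ring
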